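/- The map sending $y$ to $1 + tx$ defines an isomorphism of $\mathbb{Z}[t,t^{-1}]$-Hopf algebras from the Laurent polynomial Hopf algebra $\mathbb{Z}[t,t^{-1}][y, y^{-1}]$ (with comultiplication $y \mapsto y \otimes y$) to $\mathbb{Z}[t,t^{-1}] \otimes_{\mathbb{Z}[t]} H$, where $H = \mathbb{Z}[t,x]_{1+tx}$ carries comultiplication $x \mapsto x\otimes 1 + 1 \otimes x + t\, x\otimes x$. In particular, as algebras, $\mathbb{Z}[t,t^{-1},x]_{1+tx} \cong \mathbb{Z}[t,t^{-1},y,y^{-1}]$, and the isomorphism intertwines the comultiplications. -/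

import Mathlib

open MvPolynomial TensorProduct

noncomputable section

set_option maxRecDepth 8000
set_option synthInstance.maxHeartbeats 1000000

/-- The polynomial ring `ℤ[t,x]`, with `t = X 0` and `x = X 1`. -/
abbrev HopfA : Type := MvPolynomial (Fin 2) ℤ

/-- the element `1 + t*x` -/
abbrev hopfS : HopfA := 1 + X 0 * X 1

/-- `H = ℤ[t,x]_{1+tx}`, the localization of `ℤ[t,x]` away from `1+tx`. -/
abbrev HopfH : Type := Localization.Away hopfS

/-- `H` is a `ℤ[t]`-algebra via `t ↦ t`. -/
instance : Algebra (Polynomial ℤ) HopfH :=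
  ((algebraMap HopfA HopfH).comp (Polynomial.aeval (X 0 : HopfA)).toRingHom).toAlgebra

/-- the element `x` of `H` -/
abbrev hopfX : HopfH := algebraMap HopfA HopfH (X 1)

/-- `ℤ[t,t⁻¹]`, as a `ℤ[t]`-algebra. -/
abbrev LB : Type := LaurentPolynomial ℤ

instance : Algebra (Polynomial ℤ) LB := (Polynomial.toLaurent (R := ℤ)).toAlgebra

namespace Stmt5Aux

abbrev TH : Type := LB ⊗[Polynomial ℤ] HopfH
abbrev LL : Type := LaurentPolynomial LB

lemma algebraMap_P_H (r : Polynomial ℤ) :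
    algebraMap (Polynomial ℤ) HopfH r
      = algebraMap HopfA HopfH (Polynomial.aeval (X 0 : HopfA) r) := rfl

lemma algebraMap_P_LB (r : Polynomial ℤ) :
    algebraMap (Polynomial ℤ) LB r = Polynomial.toLaurent r := rfl

lemma algebraMap_P_H_X :
    algebraMap (Polynomial ℤ) HopfH Polynomial.X = algebraMap HopfA HopfH (X 0) := by
  rw [algebraMap_P_H, Polynomial.aeval_X]

lemma X_smul_LB (a : LB) :
    (Polynomial.X : Polynomial ℤ) • a = LaurentPolynomial.T 1 * a := by
  rw [Algebra.smul_def, algebraMap_P_LB, Polynomial.toLaurent_X]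

lemma X_smul_H (b : HopfH) :
    (Polynomial.X : Polynomial ℤ) • b = algebraMap HopfA HopfH (X 0) * b := by
  rw [Algebra.smul_def, algebraMap_P_H_X]

def sbar : HopfH := algebraMap HopfA HopfH hopfS

lemma isUnit_sbar : IsUnit sbar := IsLocalization.Away.algebraMap_isUnit hopfS

def u : THˣ :=
  (isUnit_sbar.map
    (Algebra.TensorProduct.includeRight (R := Polynomial ℤ) (A := LB) (B := HopfH))).unit

lemma u_val : (u : TH) = (1 : LB) ⊗ₜ sbar := IsUnit.unit_spec _

def φ₀ : LL →ₐ[LB] TH :=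
  AddMonoidAlgebra.lift LB TH ℤ ((Units.coeHom TH).comp (zpowersHom THˣ u))

lemma φ₀_T (n : ℤ) : φ₀ (LaurentPolynomial.T n) = ((u ^ n : THˣ) : TH) := by
  have h := AddMonoidAlgebra.lift_single ((Units.coeHom TH).comp (zpowersHom THˣ u)) n (1 : LB)
  rw [one_smul] at h
  exact h

-- generators of LL
abbrev ct1 : LL := LaurentPolynomial.C (LaurentPolynomial.T 1)
abbrev ctm1 : LL := LaurentPolynomial.C (LaurentPolynomial.T (-1))
abbrev yT : LL := LaurentPolynomial.T 1

def vec : Fin 2 → LL := ![ct1, ctm1 * (yT - 1)]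

def gb : HopfA →+* LL := (MvPolynomial.aeval (R := ℤ) vec).toRingHom

lemma gb_X0 : gb (X 0) = ct1 := by simp [gb, vec]

lemma gb_X1 : gb (X 1) = ctm1 * (yT - 1) := by simp [gb, vec]

lemma CT_mul_CT : ct1 * ctm1 = 1 := by
  rw [← map_mul, ← LaurentPolynomial.T_add]
  norm_num

lemma gb_S : gb hopfS = yT := by
  have h : gb hopfS = 1 + gb (X 0) * gb (X 1) := by simp [gb]
  rw [h, gb_X0, gb_X1, ← mul_assoc, CT_mul_CT]
  ring

lemma isUnit_gb_S : IsUnit (gb hopfS) := gb_S ▸ LaurentPolynomial.isUnit_T 1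

def g₀ : HopfH →+* LL := IsLocalization.Away.lift hopfS isUnit_gb_S

lemma g₀_algebraMap (a : HopfA) : g₀ (algebraMap HopfA HopfH a) = gb a :=
  IsLocalization.Away.lift_eq hopfS isUnit_gb_S a

def g : HopfH →ₐ[Polynomial ℤ] LL :=
  { g₀ with
    commutes' := fun r => by
      have key : gb.comp (Polynomial.aeval (X 0 : HopfA)).toRingHom
          = algebraMap (Polynomial ℤ) LL := by
        apply Polynomial.ringHom_ext'
        · exact Subsingleton.elim _ _
        · show gb (Polynomial.aeval (X 0 : HopfA) Polynomial.X) = _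
          rw [Polynomial.aeval_X, gb_X0,
            IsScalarTower.algebraMap_apply (Polynomial ℤ) LB LL, algebraMap_P_LB,
            Polynomial.toLaurent_X, LaurentPolynomial.algebraMap_apply,
            Algebra.algebraMap_self_apply]
      show g₀ (algebraMap (Polynomial ℤ) HopfH r) = algebraMap (Polynomial ℤ) LL r
      rw [algebraMap_P_H, g₀_algebraMap, ← key]
      rfl }

lemma g_apply (b : HopfH) : g b = g₀ b := rfl

def ψ : TH →ₐ[LB] LL :=
  Algebra.TensorProduct.lift (Algebra.ofId LB LL) g (fun _ _ => Commute.all _ _)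

lemma ψ_tmul (a : LB) (b : HopfH) : ψ (a ⊗ₜ b) = algebraMap LB LL a * g₀ b := by
  have h : ψ (a ⊗ₜ b) = (Algebra.ofId LB LL) a * g b :=
    Algebra.TensorProduct.lift_tmul _ _ _ a b
  rw [h, Algebra.ofId_apply, g_apply]

def vy : LLˣ :=
  ⟨LaurentPolynomial.T 1, LaurentPolynomial.T (-1),
    by rw [← LaurentPolynomial.T_add]; norm_num,
    by rw [← LaurentPolynomial.T_add]; norm_num⟩

lemma vy_zpow (n : ℤ) : ((vy ^ n : LLˣ) : LL) = LaurentPolynomial.T n := by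
  induction n using Int.induction_on with
  | zero => simp [LaurentPolynomial.T_zero]
  | succ n ih =>
      rw [zpow_add_one, Units.val_mul, ih, LaurentPolynomial.T_add]
      rfl
  | pred n ih =>
      rw [zpow_sub_one, Units.val_mul, ih, LaurentPolynomial.T_sub]
      rfl

lemma ψ_u : ψ (u : TH) = LaurentPolynomial.T 1 := by
  rw [u_val, ψ_tmul, map_one, one_mul, sbar, g₀_algebraMap, gb_S]

lemma ψ_u_zpow (n : ℤ) : ψ ((u ^ n : THˣ) : TH) = LaurentPolynomial.T n := by
  have hmap : Units.map ψ.toRingHom.toMonoidHom u = vy := by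
    apply Units.ext
    rw [Units.coe_map]
    exact ψ_u
  calc ψ ((u ^ n : THˣ) : TH)
      = ((Units.map ψ.toRingHom.toMonoidHom (u ^ n) : LLˣ) : LL) := by
        rw [Units.coe_map]; rfl
    _ = (((Units.map ψ.toRingHom.toMonoidHom u) ^ n : LLˣ) : LL) := by rw [map_zpow]
    _ = LaurentPolynomial.T n := by rw [hmap, vy_zpow]


lemma tmul_shift {B : Type} [CommRing B] [Algebra (Polynomial ℤ) B]
    (r : Polynomial ℤ) (a : LB) (b : B) :
    (algebraMap (Polynomial ℤ) LB r * a) ⊗ₜ[Polynomial ℤ] b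
      = a ⊗ₜ (algebraMap (Polynomial ℤ) B r * b) := by
  have h1 : ((algebraMap (Polynomial ℤ) LB r) ⊗ₜ[Polynomial ℤ] (1 : B))
      = (1 : LB) ⊗ₜ (algebraMap (Polynomial ℤ) B r) :=
    (Algebra.TensorProduct.algebraMap_apply r).symm.trans
      (Algebra.TensorProduct.algebraMap_apply' r)
  calc (algebraMap (Polynomial ℤ) LB r * a) ⊗ₜ[Polynomial ℤ] b
      = ((algebraMap (Polynomial ℤ) LB r) ⊗ₜ (1 : B)) * (a ⊗ₜ b) := by
        rw [Algebra.TensorProduct.tmul_mul_tmul, one_mul]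
    _ = ((1 : LB) ⊗ₜ (algebraMap (Polynomial ℤ) B r)) * (a ⊗ₜ b) := by rw [h1]
    _ = a ⊗ₜ (algebraMap (Polynomial ℤ) B r * b) := by
        rw [Algebra.TensorProduct.tmul_mul_tmul, one_mul]

lemma tmul_shift' {B : Type} [CommRing B] [Algebra (Polynomial ℤ) B] (a : LB) (b : B) :
    (LaurentPolynomial.T 1 * a) ⊗ₜ[Polynomial ℤ] b
      = a ⊗ₜ (algebraMap (Polynomial ℤ) B Polynomial.X * b) := by
  have h := tmul_shift (B := B) Polynomial.X a b
  rwa [algebraMap_P_LB, Polynomial.toLaurent_X] at h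

lemma left_inv : ψ.comp φ₀ = AlgHom.id LB LL := by
  apply AddMonoidAlgebra.algHom_ext
  intro n
  show ψ (φ₀ (LaurentPolynomial.T n)) = LaurentPolynomial.T n
  rw [φ₀_T, ψ_u_zpow]
  exact Subsingleton.elim _ _

lemma φ₀_C (a : LB) : φ₀ (LaurentPolynomial.C a) = a ⊗ₜ 1 := by
  rw [LaurentPolynomial.C_eq_algebraMap, AlgHom.commutes]
  rfl

lemma one_tmul_t : (LaurentPolynomial.T 1 : LB) ⊗ₜ[Polynomial ℤ] (1 : HopfH)
    = (1 : LB) ⊗ₜ algebraMap HopfA HopfH (X 0) := by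
  have h := tmul_shift' (1 : LB) (1 : HopfH)
  rwa [mul_one, mul_one, algebraMap_P_H_X] at h

lemma T1_mul_Tm1 : (LaurentPolynomial.T 1 : LB) * LaurentPolynomial.T (-1) = 1 := by
  rw [← LaurentPolynomial.T_add]; norm_num

lemma φ₀_yT : φ₀ yT = (u : TH) := by rw [φ₀_T 1, zpow_one]

lemma sbar_sub_one : sbar - 1 = algebraMap (Polynomial ℤ) HopfH Polynomial.X * hopfX := by
  rw [algebraMap_P_H_X, sbar, ← map_mul]
  show algebraMap HopfA HopfH (1 + X 0 * X 1) - 1 = _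
  rw [map_add, map_one]
  ring

lemma right_inv : φ₀.comp ψ = AlgHom.id LB TH := by
  apply Algebra.TensorProduct.ext
  · refine AlgHom.ext fun a => ?_
    exact (((φ₀.comp ψ).comp Algebra.TensorProduct.includeLeft).commutes a).trans
      (((AlgHom.id LB TH).comp Algebra.TensorProduct.includeLeft).commutes a).symm
  · apply AlgHom.coe_ringHom_injective
    apply IsLocalization.ringHom_ext (R := HopfA) (S := HopfH)
      (P := TH) (Submonoid.powers hopfS)
    apply MvPolynomial.ringHom_ext'
    · exact Subsingleton.elim _ _
    · intro i
      fin_cases i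
      · show φ₀ (ψ ((1 : LB) ⊗ₜ algebraMap HopfA HopfH (X 0)))
            = (1 : LB) ⊗ₜ algebraMap HopfA HopfH (X 0)
        rw [ψ_tmul, map_one, one_mul, g₀_algebraMap, gb_X0, φ₀_C, one_tmul_t]
      · show φ₀ (ψ ((1 : LB) ⊗ₜ algebraMap HopfA HopfH (X 1)))
            = (1 : LB) ⊗ₜ algebraMap HopfA HopfH (X 1)
        rw [ψ_tmul, map_one, one_mul, g₀_algebraMap, gb_X1, map_mul, map_sub, map_one,
          φ₀_C, φ₀_yT, u_val]
        rw [show ((1 : TH) = (1 : LB) ⊗ₜ (1 : HopfH)) from rfl, ← TensorProduct.tmul_sub,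
          Algebra.TensorProduct.tmul_mul_tmul, one_mul, mul_one, sbar_sub_one,
          ← tmul_shift Polynomial.X (LaurentPolynomial.T (-1)) hopfX,
          algebraMap_P_LB, Polynomial.toLaurent_X, T1_mul_Tm1]

def φEquiv : LL ≃ₐ[LB] TH := AlgEquiv.ofAlgHom φ₀ ψ right_inv left_inv

lemma one_tmul_sbar : (1 : LB) ⊗ₜ[Polynomial ℤ] sbar
    = 1 + (LaurentPolynomial.T 1 : LB) ⊗ₜ hopfX := by
  have h : sbar = 1 + algebraMap (Polynomial ℤ) HopfH Polynomial.X * hopfX := by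
    rw [← sbar_sub_one]; ring
  rw [h, TensorProduct.tmul_add, ← tmul_shift' (1 : LB) hopfX, mul_one]
  rfl

lemma φEquiv_T1 : φEquiv (LaurentPolynomial.T 1)
    = 1 + (LaurentPolynomial.T 1 : LB) ⊗ₜ hopfX := by
  show φ₀ (LaurentPolynomial.T 1) = _
  rw [φ₀_yT, u_val, one_tmul_sbar]

end Stmt5Aux

/-- There is an isomorphism of `ℤ[t,t⁻¹]`-algebras
`ℤ[t,t⁻¹][y,y⁻¹] ≅ ℤ[t,t⁻¹] ⊗_{ℤ[t]} H` sending `y ↦ 1 + t⊗x`, and it intertwines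
the comultiplication `y ↦ y ⊗ y` with the base change of the comultiplication
`Δ(x) = x⊗1 + 1⊗x + t·x⊗x` of `H`: the base-changed `Δ` sends `1 + t⊗x` to the
element corresponding to `(1+t⊗x) ⊗ (1+t⊗x)`, namely
`1 + t⊗(x⊗1) + t⊗(1⊗x) + t²⊗(x⊗x)`. -/
theorem stmt_5 :
    ∃ φ : LaurentPolynomial LB ≃ₐ[LB] (LB ⊗[Polynomial ℤ] HopfH),
      φ (LaurentPolynomial.T 1) = 1 + (LaurentPolynomial.T 1 : LB) ⊗ₜ hopfX ∧
      ∀ (Δ : HopfH →ₐ[Polynomial ℤ] HopfH ⊗[Polynomial ℤ] HopfH),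
        Δ hopfX = hopfX ⊗ₜ 1 + 1 ⊗ₜ hopfX +
            ((algebraMap HopfA HopfH (X 0)) * hopfX) ⊗ₜ hopfX →
        (Algebra.TensorProduct.map (AlgHom.id (Polynomial ℤ) LB) Δ)
            (φ (LaurentPolynomial.T 1))
          = 1 + (LaurentPolynomial.T 1 : LB) ⊗ₜ (hopfX ⊗ₜ 1)
              + (LaurentPolynomial.T 1 : LB) ⊗ₜ (1 ⊗ₜ hopfX)
              + (LaurentPolynomial.T 1 * LaurentPolynomial.T 1 : LB) ⊗ₜ
                  (hopfX ⊗ₜ hopfX) := by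
  refine ⟨Stmt5Aux.φEquiv, Stmt5Aux.φEquiv_T1, fun Δ hΔ => ?_⟩
  have hx : ((algebraMap HopfA HopfH (X 0)) * hopfX) ⊗ₜ[Polynomial ℤ] hopfX
      = algebraMap (Polynomial ℤ) (HopfH ⊗[Polynomial ℤ] HopfH) Polynomial.X
          * (hopfX ⊗ₜ hopfX) := by
    rw [Algebra.TensorProduct.algebraMap_apply, Algebra.TensorProduct.tmul_mul_tmul,
      one_mul, Stmt5Aux.algebraMap_P_H_X]
  rw [Stmt5Aux.φEquiv_T1, map_add, map_one, Algebra.TensorProduct.map_tmul,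
    AlgHom.coe_id, id_eq, hΔ, TensorProduct.tmul_add, TensorProduct.tmul_add, hx,
    ← Stmt5Aux.tmul_shift' (LaurentPolynomial.T 1) (hopfX ⊗ₜ[Polynomial ℤ] hopfX)]
  rw [← add_assoc, ← add_assoc]
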